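/- Affinity lower bound for product measures: for probability measures P and Q on the same space and n ≥ 1, the testing affinity of the n-fold products satisfies ‖Pⁿ ∧ Qⁿ‖ ≥ (1/8)(1 - TV(P,Q))^{2n}, where ‖μ ∧ ν‖ = ∫ min(dμ, dν). -/

import Mathlib

open MeasureTheory

/-- Total variation distance between two finite measures. -/
noncomputable def tvDist {Ω : Type*} [MeasurableSpace Ω]
    (P Q : Measure Ω) [IsFiniteMeasure P] [IsFiniteMeasure Q] : ℝ :=
  ((P.toSignedMeasure - Q.toSignedMeasure).totalVariation Set.univ).toReal / 2

/-- Monotonicity of the product measure. -/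
lemma pi_mono_aux {ι : Type*} [Fintype ι] {α : ι → Type*} [∀ i, MeasurableSpace (α i)]
    (μ ν : ∀ i, Measure (α i)) (h : ∀ i, μ i ≤ ν i) :
    Measure.pi μ ≤ Measure.pi ν := by
  rw [Measure.le_iff]
  intro t ht
  rw [Measure.pi_def, Measure.pi_def, toMeasure_apply _ _ ht, toMeasure_apply _ _ ht]
  have : (OuterMeasure.pi fun i => (μ i).toOuterMeasure) ≤
      (OuterMeasure.pi fun i => (ν i).toOuterMeasure) := by
    refine OuterMeasure.le_boundedBy.2 fun u => ?_
    refine le_trans (OuterMeasure.boundedBy_le u) ?_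
    exact Finset.prod_le_prod' fun i _ => (Measure.le_iff'.1 (h i)) _
  exact this t

/-- Affinity lower bound for product measures: the testing affinity
`‖Pⁿ ∧ Qⁿ‖ = (Pⁿ ⊓ Qⁿ)(univ)` satisfies `‖Pⁿ ∧ Qⁿ‖ ≥ (1/8)(1 - TV(P,Q))^(2n)`. -/
theorem affinity_product_lower_bound {Ω : Type*} [MeasurableSpace Ω]
    (P Q : Measure Ω) [IsProbabilityMeasure P] [IsProbabilityMeasure Q]
    (n : ℕ) (hn : 1 ≤ n) :
    ENNReal.ofReal ((1 / 8) * (1 - tvDist P Q) ^ (2 * n)) ≤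
      (Measure.pi (fun _ : Fin n => P) ⊓ Measure.pi (fun _ : Fin n => Q))
        Set.univ := by
  set s : SignedMeasure Ω := P.toSignedMeasure - Q.toSignedMeasure with hs_def
  obtain ⟨A, hA, hA₂, hA₃, hpos, hneg⟩ := s.toJordanDecomposition_spec
  -- basic pointwise comparisons on A and Aᶜ
  have hsapp : ∀ t : Set Ω, MeasurableSet t → s t = (P t).toReal - (Q t).toReal := by
    intro t ht
    rw [hs_def, VectorMeasure.sub_apply, Measure.toSignedMeasure_apply_measurable ht,
      Measure.toSignedMeasure_apply_measurable ht]
    rfl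
  have hPA : ∀ t : Set Ω, MeasurableSet t → t ⊆ A → Q t ≤ P t := by
    intro t ht hts
    have h1 : (0 : SignedMeasure Ω) t ≤ s t :=
      VectorMeasure.subset_le_of_restrict_le_restrict 0 s hA hA₂ hts
    rw [VectorMeasure.zero_apply, hsapp t ht, sub_nonneg] at h1
    exact (ENNReal.toReal_le_toReal (measure_ne_top _ _) (measure_ne_top _ _)).1 h1
  have hQA : ∀ t : Set Ω, MeasurableSet t → t ⊆ Aᶜ → P t ≤ Q t := by
    intro t ht hts
    have h1 : s t ≤ (0 : SignedMeasure Ω) t :=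
      VectorMeasure.subset_le_of_restrict_le_restrict s 0 hA.compl hA₃ hts
    rw [VectorMeasure.zero_apply, hsapp t ht, sub_nonpos] at h1
    exact (ENNReal.toReal_le_toReal (measure_ne_top _ _) (measure_ne_top _ _)).1 h1
  -- the "overlap" measure
  set μ : Measure Ω := Q.restrict A + P.restrict Aᶜ with hμ_def
  have hμP : μ ≤ P := by
    rw [hμ_def]
    have h1 : Q.restrict A ≤ P.restrict A := by
      refine Measure.le_iff.2 fun t ht => ?_
      rw [Measure.restrict_apply ht, Measure.restrict_apply ht]
      exact hPA _ (ht.inter hA) Set.inter_subset_right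
    calc Q.restrict A + P.restrict Aᶜ ≤ P.restrict A + P.restrict Aᶜ :=
          add_le_add_left h1 _
      _ = P := Measure.restrict_add_restrict_compl hA
  have hμQ : μ ≤ Q := by
    rw [hμ_def]
    have h1 : P.restrict Aᶜ ≤ Q.restrict Aᶜ := by
      refine Measure.le_iff.2 fun t ht => ?_
      rw [Measure.restrict_apply ht, Measure.restrict_apply ht]
      exact hQA _ (ht.inter hA.compl) Set.inter_subset_right
    calc Q.restrict A + P.restrict Aᶜ ≤ Q.restrict A + Q.restrict Aᶜ :=
          add_le_add_right h1 _
      _ = Q := Measure.restrict_add_restrict_compl hA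
  -- total variation distance in terms of A
  have hμuniv : μ Set.univ = Q A + P Aᶜ := by
    rw [hμ_def, Measure.add_apply, Measure.restrict_apply MeasurableSet.univ,
      Measure.restrict_apply MeasurableSet.univ, Set.univ_inter, Set.univ_inter]
  have hsA : s A = (P A).toReal - (Q A).toReal := hsapp A hA
  have hsAc : s Aᶜ = (P Aᶜ).toReal - (Q Aᶜ).toReal := hsapp Aᶜ hA.compl
  have htv : tvDist P Q = (P A).toReal - (Q A).toReal := by
    have h0 : 0 ≤ s A := by
      have := VectorMeasure.subset_le_of_restrict_le_restrict 0 s hA hA₂ (le_refl A)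
      simpa using this
    have h0' : s Aᶜ ≤ 0 := by
      have := VectorMeasure.subset_le_of_restrict_le_restrict s 0 hA.compl hA₃ (le_refl Aᶜ)
      simpa using this
    have hPuniv : (P A).toReal + (P Aᶜ).toReal = 1 := by
      rw [← ENNReal.toReal_add (measure_ne_top _ _) (measure_ne_top _ _),
        measure_add_measure_compl hA]
      simp
    have hQuniv : (Q A).toReal + (Q Aᶜ).toReal = 1 := by
      rw [← ENNReal.toReal_add (measure_ne_top _ _) (measure_ne_top _ _),
        measure_add_measure_compl hA]
      simp
    have hTV : s.totalVariation Set.univ =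
        ENNReal.ofReal (s A) + ENNReal.ofReal (-s Aᶜ) := by
      rw [SignedMeasure.totalVariation, Measure.add_apply, hpos, hneg,
        SignedMeasure.toMeasureOfZeroLE_apply _ _ _ MeasurableSet.univ,
        SignedMeasure.toMeasureOfLEZero_apply _ _ _ MeasurableSet.univ]
      simp only [Set.inter_univ]
      congr 1
      · rw [ENNReal.ofReal, Real.toNNReal_of_nonneg h0]
      · rw [ENNReal.ofReal, Real.toNNReal_of_nonneg (neg_nonneg.2 h0')]
    rw [tvDist, ← hs_def, hTV]
    rw [← ENNReal.ofReal_add (by simpa using h0) (by simpa using neg_nonneg.2 h0'),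
      ENNReal.toReal_ofReal (by nlinarith [neg_nonneg.2 h0', h0])]
    rw [hsA, hsAc]
    nlinarith [hPuniv, hQuniv]
  -- 1 - tvDist = μ univ
  have hone : 1 - tvDist P Q = (μ Set.univ).toReal := by
    have hPuniv : (P Aᶜ).toReal = 1 - (P A).toReal := by
      have : (P A).toReal + (P Aᶜ).toReal = 1 := by
        rw [← ENNReal.toReal_add (measure_ne_top _ _) (measure_ne_top _ _),
          measure_add_measure_compl hA]
        simp
      linarith
    rw [htv, hμuniv, ENNReal.toReal_add (measure_ne_top _ _) (measure_ne_top _ _), hPuniv]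
    ring
  set a : ℝ := (μ Set.univ).toReal with ha_def
  have ha0 : 0 ≤ a := ENNReal.toReal_nonneg
  have ha1 : a ≤ 1 := by
    have h1 : μ Set.univ ≤ 1 := le_trans (Measure.le_iff'.1 hμP Set.univ) (by simp)
    calc a ≤ ENNReal.toReal 1 := ENNReal.toReal_mono ENNReal.one_ne_top h1
      _ = 1 := ENNReal.toReal_one
  -- product measure comparison
  have hpiP : Measure.pi (fun _ : Fin n => μ) ≤ Measure.pi (fun _ : Fin n => P) :=
    pi_mono_aux _ _ fun _ => hμP
  have hpiQ : Measure.pi (fun _ : Fin n => μ) ≤ Measure.pi (fun _ : Fin n => Q) :=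
    pi_mono_aux _ _ fun _ => hμQ
  have hpile : Measure.pi (fun _ : Fin n => μ) ≤
      Measure.pi (fun _ : Fin n => P) ⊓ Measure.pi (fun _ : Fin n => Q) :=
    le_inf hpiP hpiQ
  have hpiuniv : Measure.pi (fun _ : Fin n => μ) Set.univ = (μ Set.univ) ^ n := by
    rw [Measure.pi_univ]
    simp
  refine le_trans ?_ (Measure.le_iff'.1 hpile Set.univ)
  rw [hpiuniv]
  have hμu : μ Set.univ = ENNReal.ofReal a := by
    rw [ha_def, ENNReal.ofReal_toReal (measure_ne_top _ _)]
  rw [hμu, ← ENNReal.ofReal_pow ha0]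
  refine ENNReal.ofReal_le_ofReal ?_
  have h2n : a ^ (2 * n) ≤ a ^ n := by
    apply pow_le_pow_of_le_one ha0 ha1
    omega
  have : (1 : ℝ) / 8 * (1 - tvDist P Q) ^ (2 * n) = 1 / 8 * a ^ (2 * n) := by rw [hone]
  rw [this]
  nlinarith [pow_nonneg ha0 (2 * n), pow_nonneg ha0 n, h2n]
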